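/- The one-sided Mahavier dynamical system (I_{F_{1/2,3}}^+, σ^+_{F_{1/2,3}}) does not have the specification property. -/

import Mathlib

open Set Filter Topology

/-- One-sided Mahavier product of a relation `F` on `X`. -/
def MahavierPlus {X : Type*} (F : Set (X × X)) : Set (ℕ → X) :=
  {x | ∀ n : ℕ, (x n, x (n + 1)) ∈ F}

/-- Two-sided Mahavier product of a relation `F` on `X`. -/
def MahavierTwo {X : Type*} (F : Set (X × X)) : Set (ℤ → X) :=
  {x | ∀ n : ℤ, (x n, x (n + 1)) ∈ F}

/-- The shift map on the one-sided Mahavier product. -/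
def shiftPlus {X : Type*} (F : Set (X × X)) (x : MahavierPlus F) : MahavierPlus F :=
  ⟨fun n => (x : ℕ → X) (n + 1), fun n => x.2 (n + 1)⟩

/-- The shift map on the two-sided Mahavier product. -/
def shiftTwo {X : Type*} (F : Set (X × X)) (x : MahavierTwo F) : MahavierTwo F :=
  ⟨fun n => (x : ℤ → X) (n + 1), fun n => x.2 (n + 1)⟩

/-- The metric `D(x,y) = sup_{n ≥ 1} d(x_n, y_n)/2^n` on one-sided sequences
(coordinates are indexed from `0` here, so the weight is `2^(n+1)`). -/
noncomputable def DPlus {X : Type*} [PseudoMetricSpace X] (x y : ℕ → X) : ℝ :=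
  ⨆ n : ℕ, dist (x n) (y n) / 2 ^ (n + 1)

/-- The metric `D(x,y) = sup_{n ∈ ℤ} d(x_n, y_n)/2^{|n|}` on two-sided sequences. -/
noncomputable def DTwo {X : Type*} [PseudoMetricSpace X] (x y : ℤ → X) : ℝ :=
  ⨆ n : ℤ, dist (x n) (y n) / 2 ^ n.natAbs

/-- Topological transitivity. -/
def TopTransitive {Y : Type*} [TopologicalSpace Y] (f : Y → Y) : Prop :=
  ∀ U V : Set Y, IsOpen U → IsOpen V → U.Nonempty → V.Nonempty →
    ∃ n : ℕ, (f^[n] '' U ∩ V).Nonempty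

/-- Topological mixing. -/
def TopMixing {Y : Type*} [TopologicalSpace Y] (f : Y → Y) : Prop :=
  ∀ U V : Set Y, IsOpen U → IsOpen V → U.Nonempty → V.Nonempty →
    ∃ n₀ : ℕ, ∀ n : ℕ, n₀ ≤ n → (f^[n] '' U ∩ V).Nonempty

/-- The shadowing property for a map `f` with respect to a distance `dY`. -/
def ShadowingProp {Y : Type*} (dY : Y → Y → ℝ) (f : Y → Y) : Prop :=
  ∀ ε : ℝ, 0 < ε → ∃ δ : ℝ, 0 < δ ∧ ∀ x : ℕ → Y,
    (∀ k : ℕ, dY (f (x k)) (x (k + 1)) < δ) →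
    ∃ y : Y, ∀ k : ℕ, dY (f^[k] y) (x k) < ε

/-- The specification property for a map `f` with respect to a distance `dY`. -/
def SpecProp {Y : Type*} (dY : Y → Y → ℝ) (f : Y → Y) : Prop :=
  ∀ ε : ℝ, 0 < ε → ∃ N : ℕ, 0 < N ∧ ∀ n : ℕ, 0 < n →
    ∀ x : Fin n → Y, ∀ k l : Fin n → ℕ,
      (∀ i, k i ≤ l i) →
      (∀ i j : Fin n, (i : ℕ) + 1 = (j : ℕ) → l i + N ≤ k j) →
      ∃ y : Y, ∀ i : Fin n, ∀ m : ℕ, k i ≤ m → m ≤ l i →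
        dY (f^[m] y) (f^[m] (x i)) ≤ ε

/-- The CR-specification property for the one-sided Mahavier product of `F`. -/
def CRSpec {X : Type*} [PseudoMetricSpace X] (F : Set (X × X)) : Prop :=
  ∀ ε : ℝ, 0 < ε → ∃ N : ℕ, 0 < N ∧ ∀ n : ℕ, 0 < n →
    ∀ x : Fin n → MahavierPlus F, ∀ k l : Fin n → ℕ,
      (∀ i, k i ≤ l i) →
      (∀ i j : Fin n, (i : ℕ) + 1 = (j : ℕ) → l i + N ≤ k j) →
      ∃ y : MahavierPlus F, ∀ i : Fin n, ∀ m : ℕ, k i ≤ m → m ≤ l i →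
        dist ((x i : ℕ → X) m) ((y : ℕ → X) m) ≤ ε

/-- The image of a set under a relation. -/
def relImage {X : Type*} (F : Set (X × X)) (A : Set X) : Set X :=
  {y | ∃ a ∈ A, (a, y) ∈ F}

/-- Composition of relations. -/
def relComp {X : Type*} (F G : Set (X × X)) : Set (X × X) :=
  {p | ∃ z : X, (p.1, z) ∈ F ∧ (z, p.2) ∈ G}

/-- Iterated composition `F^n` of a relation with itself. -/
def relPow {X : Type*} (F : Set (X × X)) : ℕ → Set (X × X)
  | 0 => {p | p.1 = p.2}
  | n + 1 => relComp (relPow F n) F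

/-- The relation `F_{1/2,3} = {(x,3x) : 0 ≤ x ≤ 1/3} ∪ {(x,x/2) : 0 ≤ x ≤ 1}` on `I = [0,1]`. -/
def F23 : Set (ℝ × ℝ) :=
  {p | (p.1 ∈ Set.Icc (0 : ℝ) (1 / 3) ∧ p.2 = 3 * p.1) ∨
       (p.1 ∈ Set.Icc (0 : ℝ) 1 ∧ p.2 = p.1 / 2)}

/-- Coordinates of Mahavier points of `F23` lie in `[0,1]`. -/
lemma mah_coord_mem {y : ℕ → ℝ} (hy : y ∈ MahavierPlus F23) (n : ℕ) :
    y n ∈ Set.Icc (0 : ℝ) 1 := by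
  have h := hy n
  rcases h with ⟨⟨h0, h1⟩, _⟩ | ⟨⟨h0, h1⟩, _⟩
  · exact ⟨h0, by linarith⟩
  · exact ⟨h0, h1⟩

/-- Each step of a Mahavier point multiplies by 3 or by 1/2. -/
lemma mah_step {y : ℕ → ℝ} (hy : y ∈ MahavierPlus F23) (n : ℕ) :
    y (n + 1) = 3 * y n ∨ y (n + 1) = y n / 2 := by
  rcases hy n with ⟨_, h⟩ | ⟨_, h⟩
  · exact Or.inl h
  · exact Or.inr h

/-- After `g` steps, the value is the initial one times `3^a/2^(g-a)`. -/
lemma mah_mult {y : ℕ → ℝ} (hy : y ∈ MahavierPlus F23) (g : ℕ) :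
    ∃ a : ℕ, y g * 2 ^ g = y 0 * 6 ^ a := by
  induction g with
  | zero => exact ⟨0, by simp⟩
  | succ g ih =>
    obtain ⟨a, hA⟩ := ih
    rcases mah_step hy g with h | h
    · exact ⟨a + 1, by rw [h]; linear_combination (6 : ℝ) * hA⟩
    · exact ⟨a, by rw [h]; linear_combination hA⟩

/-- The tent sequence: goes up to `1` at time `g` by tripling, then halves. -/
noncomputable def zfun (g j : ℕ) : ℝ :=
  if j ≤ g then (3 : ℝ) ^ j / 3 ^ g else (1 / 2 : ℝ) ^ (j - g)

lemma zfun_at (g : ℕ) : zfun g g = 1 := by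
  simp [zfun]

lemma zfun_mem (g : ℕ) : zfun g ∈ MahavierPlus F23 := by
  intro n
  rcases Nat.lt_or_ge n g with hn | hn
  · -- tripling region
    have h3g : (0 : ℝ) < 3 ^ g := by positivity
    have hzn : zfun g n = (3 : ℝ) ^ n / 3 ^ g := by
      simp [zfun, Nat.le_of_lt hn]
    have hzn1 : zfun g (n + 1) = (3 : ℝ) ^ (n + 1) / 3 ^ g := by
      have hn1 : n + 1 ≤ g := hn
      simp [zfun, hn1]
    left
    constructor
    · constructor
      · rw [hzn]; positivity
      · rw [hzn]
        rw [div_le_div_iff₀ h3g (by norm_num : (0:ℝ) < 3)]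
        calc (3 : ℝ) ^ n * 3 = 3 ^ (n + 1) := by rw [pow_succ]
          _ ≤ 3 ^ g := pow_le_pow_right₀ (by norm_num) hn
          _ = 1 * 3 ^ g := by ring
    · rw [hzn, hzn1, pow_succ]
      try ring
      try rfl
  · -- halving region
    rcases Nat.eq_or_lt_of_le hn with heq | hlt
    · have hzn : zfun g n = 1 := by
        rw [← heq]; exact zfun_at g
      have hzn1 : zfun g (n + 1) = 1 / 2 := by
        have h1 : ¬ (n + 1 ≤ g) := by omega
        have h2 : n + 1 - g = 1 := by omega
        simp [zfun, h1, h2]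
      right
      exact ⟨by rw [hzn]; norm_num, by rw [hzn1, hzn]⟩
    · have hzn : zfun g n = (1 / 2 : ℝ) ^ (n - g) := by
        have h1 : ¬ (n ≤ g) := by omega
        simp [zfun, h1]
      have hzn1 : zfun g (n + 1) = (1 / 2 : ℝ) ^ (n - g) * (1 / 2) := by
        have h1 : ¬ (n + 1 ≤ g) := by omega
        have h2 : n + 1 - g = (n - g) + 1 := by omega
        simp [zfun, h1, h2, pow_succ]
      right
      constructor
      · constructor
        · rw [hzn]; positivity
        · rw [hzn]
          exact pow_le_one₀ (by norm_num) (by norm_num)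
      · rw [hzn, hzn1]; ring

/-- Coordinates of the iterated shift. -/
lemma shift_iter (y : MahavierPlus F23) (m : ℕ) (n : ℕ) :
    (((shiftPlus F23)^[m] y : MahavierPlus F23) : ℕ → ℝ) n = (y : ℕ → ℝ) (n + m) := by
  induction m generalizing n with
  | zero => simp
  | succ m ih =>
    rw [Function.iterate_succ_apply']
    show (((shiftPlus F23)^[m] y : MahavierPlus F23) : ℕ → ℝ) (n + 1) = _
    rw [ih]
    have hn : n + 1 + m = n + (m + 1) := by omega
    rw [hn]

/-- Lower bound for `DPlus` by the distance at coordinate `0`. -/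
lemma dplus_ge (u v : ℕ → ℝ) (hb : ∀ n, dist (u n) (v n) ≤ 1) :
    dist (u 0) (v 0) / 2 ≤ DPlus u v := by
  have hbdd : BddAbove (Set.range fun n : ℕ => dist (u n) (v n) / 2 ^ (n + 1)) := by
    refine ⟨1 / 2, ?_⟩
    rintro x ⟨n, rfl⟩
    have h1 : (2 : ℝ) ≤ 2 ^ (n + 1) := by
      calc (2 : ℝ) = 2 ^ 1 := (pow_one 2).symm
        _ ≤ 2 ^ (n + 1) := pow_le_pow_right₀ (by norm_num) (by omega)
    have h2 : (0 : ℝ) ≤ dist (u n) (v n) := dist_nonneg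
    have h3 : dist (u n) (v n) / 2 ^ (n + 1) ≤ 1 / 2 ^ (n + 1) := by
      gcongr
      exact hb n
    calc dist (u n) (v n) / 2 ^ (n + 1) ≤ 1 / 2 ^ (n + 1) := h3
      _ ≤ 1 / 2 := by
        apply div_le_div_of_nonneg_left (by norm_num) (by norm_num) h1
  have := le_ciSup hbdd 0
  simpa [DPlus] using this

/-- Key coordinate estimate from the Mahavier `DPlus` closeness at a shifted time. -/
lemma close_at (y z : MahavierPlus F23) (m : ℕ)
    (h : DPlus (((shiftPlus F23)^[m] y : MahavierPlus F23) : ℕ → ℝ)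
        (((shiftPlus F23)^[m] z : MahavierPlus F23) : ℕ → ℝ) ≤ 1 / 20) :
    dist ((y : ℕ → ℝ) m) ((z : ℕ → ℝ) m) ≤ 1 / 10 := by
  have hb : ∀ n, dist ((((shiftPlus F23)^[m] y : MahavierPlus F23) : ℕ → ℝ) n)
      ((((shiftPlus F23)^[m] z : MahavierPlus F23) : ℕ → ℝ) n) ≤ 1 := by
    intro n
    rw [shift_iter, shift_iter]
    have h1 := mah_coord_mem y.2 (n + m)
    have h2 := mah_coord_mem z.2 (n + m)
    rw [Real.dist_eq, abs_le]
    constructor <;> [linarith [h1.1, h2.2]; linarith [h1.2, h2.1]]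
  have hge := dplus_ge _ _ hb
  rw [shift_iter, shift_iter] at hge
  simp only [Nat.zero_add] at hge
  linarith

/-- For any `g ≥ N`, the spec property at `ε = 1/20` produces a Mahavier point
whose coordinates `0` and `g` are both within `1/10` of `1`. -/
lemma key_point (N : ℕ)
    (hspec : ∀ n : ℕ, 0 < n →
      ∀ x : Fin n → MahavierPlus F23, ∀ k l : Fin n → ℕ,
        (∀ i, k i ≤ l i) →
        (∀ i j : Fin n, (i : ℕ) + 1 = (j : ℕ) → l i + N ≤ k j) →
        ∃ y : MahavierPlus F23, ∀ i : Fin n, ∀ m : ℕ, k i ≤ m → m ≤ l i →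
          DPlus (((shiftPlus F23)^[m] y : MahavierPlus F23) : ℕ → ℝ)
            (((shiftPlus F23)^[m] (x i) : MahavierPlus F23) : ℕ → ℝ) ≤ 1 / 20)
    (g : ℕ) (hg : N ≤ g) :
    ∃ y : ℕ → ℝ, y ∈ MahavierPlus F23 ∧ |y 0 - 1| ≤ 1 / 10 ∧ |y g - 1| ≤ 1 / 10 := by
  set z0 : MahavierPlus F23 := ⟨zfun 0, zfun_mem 0⟩ with hz0
  set zg : MahavierPlus F23 := ⟨zfun g, zfun_mem g⟩ with hzg
  set x : Fin 2 → MahavierPlus F23 := fun i => if (i : ℕ) = 0 then z0 else zg with hx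
  set k : Fin 2 → ℕ := fun i => if (i : ℕ) = 0 then 0 else g with hk
  obtain ⟨y, hy⟩ := hspec 2 (by norm_num) x k k (fun i => le_rfl)
    (by
      intro i j hij
      have hi : (i : ℕ) = 0 := by omega
      have hj : (j : ℕ) = 1 := by omega
      simp [hk, hi, hj, hg, (Fin.ext hi : i = 0), (Fin.ext hj : j = 1)])
  refine ⟨(y : ℕ → ℝ), y.2, ?_, ?_⟩
  · have h0 := hy 0 0 (by simp [hk]) (by simp [hk])
    have hx0 : x 0 = z0 := by simp [hx]
    rw [hx0] at h0
    have := close_at y z0 0 h0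
    rw [Real.dist_eq] at this
    have hz : (z0 : ℕ → ℝ) 0 = 1 := zfun_at 0
    rw [hz] at this
    exact this
  · have h1 := hy 1 g (by simp [hk]) (by simp [hk])
    have hx1 : x 1 = zg := by simp [hx]
    rw [hx1] at h1
    have := close_at y zg g h1
    rw [Real.dist_eq] at this
    have hz : (zg : ℕ → ℝ) g = 1 := zfun_at g
    rw [hz] at this
    exact this

/-- The one-sided Mahavier system of `F_{1/2,3}` does not have the
specification property. -/
theorem stmt4 :
    ¬ SpecProp (fun a b : MahavierPlus F23 => DPlus (a : ℕ → ℝ) (b : ℕ → ℝ))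
        (shiftPlus F23) := by
  intro h
  obtain ⟨N, hNpos, hspec⟩ := h (1 / 20) (by norm_num)
  obtain ⟨y, hy, hy0, hyg⟩ := key_point N hspec N le_rfl
  obtain ⟨y', hy', hy'0, hy'g⟩ := key_point N hspec (N + 1) (Nat.le_succ N)
  obtain ⟨a, hA⟩ := mah_mult hy N
  obtain ⟨a', hA'⟩ := mah_mult hy' (N + 1)
  rw [abs_le] at hy0 hyg hy'0 hy'g
  have hP : (0 : ℝ) < 2 ^ N := by positivity
  have h6 : (0 : ℝ) < 6 ^ a := by positivity
  have h6' : (0 : ℝ) < 6 ^ a' := by positivity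
  rw [pow_succ] at hA'
  -- hA : y N * 2 ^ N = y 0 * 6 ^ a
  -- hA' : y' (N+1) * (2 ^ N * 2) = y' 0 * 6 ^ a'
  rcases le_or_gt a' a with hle | hlt
  · have h66 : (6 : ℝ) ^ a' ≤ 6 ^ a := pow_le_pow_right₀ (by norm_num) hle
    -- y' (N+1) * 2^N * 2 * y 0 ≤ y' 0 * 6^a * y 0 = y' 0 * (y N * 2^N)
    have hkey : y' (N + 1) * 2 * y 0 ≤ y' 0 * y N := by
      have h1 : y' (N + 1) * (2 ^ N * 2) * y 0 ≤ y' 0 * 6 ^ a * y 0 := by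
        rw [hA']
        have : y' 0 * 6 ^ a' ≤ y' 0 * 6 ^ a :=
          mul_le_mul_of_nonneg_left h66 (by linarith)
        nlinarith
      have h2 : y' 0 * 6 ^ a * y 0 = y' 0 * (y N * 2 ^ N) := by
        linear_combination (-(y' 0)) * hA
      have h3 : y' (N + 1) * 2 * y 0 * 2 ^ N ≤ y' 0 * y N * 2 ^ N := by
        nlinarith
      exact le_of_mul_le_mul_right h3 hP
    nlinarith
  · have h66 : (6 : ℝ) ^ a * 6 ≤ 6 ^ a' := by
      calc (6 : ℝ) ^ a * 6 = 6 ^ (a + 1) := by rw [pow_succ]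
        _ ≤ 6 ^ a' := pow_le_pow_right₀ (by norm_num) hlt
    have hkey : 6 * (y' 0 * y N) ≤ y' (N + 1) * 2 * y 0 := by
      have h1 : y' 0 * (6 ^ a * 6) * y 0 ≤ y' (N + 1) * (2 ^ N * 2) * y 0 := by
        rw [hA']
        have : y' 0 * (6 ^ a * 6) ≤ y' 0 * 6 ^ a' :=
          mul_le_mul_of_nonneg_left h66 (by linarith)
        nlinarith
      have h2 : y' 0 * (6 ^ a * 6) * y 0 = 6 * (y' 0 * (y N * 2 ^ N)) := by
        linear_combination (-(6 * y' 0)) * hA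
      have h3 : 6 * (y' 0 * y N) * 2 ^ N ≤ y' (N + 1) * 2 * y 0 * 2 ^ N := by
        nlinarith
      exact le_of_mul_le_mul_right h3 hP
    nlinarith
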